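/- Let n ≥ 3 be an integer. There exists a constant C_n > 0 depending only on n such that for every real T ≥ 1, (1/#G(T)) · Σ_{a ∈ G(T)} (a_1 + a_2 + … + a_n)/(a_1·a_2·…·a_n)^{1/(n-1)} ≤ C_n · T^{-1/(n-1)}, where G(T) = {a ∈ ℤ^n_{>0} : gcd(a_1,…,a_n) = 1, max_i a_i ≤ T}. -/

import Mathlib

open Finset

lemma ptwise {s : ℝ} (hs0 : 0 < s) (hs1 : s < 1) {x : ℝ} (hx : 1 ≤ x) :
    (1 - s) * x ^ (-s) ≤ x ^ (1 - s) - (x - 1) ^ (1 - s) := by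
  have hx0 : 0 < x := lt_of_lt_of_le one_pos hx
  have hinv : 1 / x ≤ 1 := by rw [div_le_one hx0]; exact hx
  have hnd : -1 / x = -(1 / x) := by rw [neg_div]
  have h1 : x - 1 = x * (1 + (-1/x)) := by field_simp; ring
  have h2 : (x - 1) ^ (1-s) = x ^ (1-s) * (1 + (-1/x)) ^ (1-s) := by
    rw [h1, Real.mul_rpow hx0.le (by rw [hnd]; linarith)]
  have hb : (1 + (-1/x)) ^ (1-s) ≤ 1 + (1-s) * (-1/x) :=
    rpow_one_add_le_one_add_mul_self (by rw [hnd]; linarith) (by linarith) (by linarith)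
  have h3 : x ^ (1-s) * (1 + (1-s) * (-1/x)) = x ^ (1-s) - (1-s) * (x ^ (1-s) / x) := by ring
  have h4 : x ^ (1-s) / x = x ^ (-s) := by
    rw [div_eq_mul_inv, ← Real.rpow_neg_one x, ← Real.rpow_add hx0]; congr 1; ring
  have h5 : (x-1)^(1-s) ≤ x ^ (1-s) - (1-s) * x ^ (-s) := by
    rw [h2]
    calc x ^ (1-s) * (1 + (-1/x)) ^ (1-s) ≤ x ^ (1-s) * (1 + (1-s) * (-1/x)) :=
          mul_le_mul_of_nonneg_left hb (Real.rpow_nonneg hx0.le _)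
      _ = x ^ (1-s) - (1-s) * x ^ (-s) := by rw [h3, h4]
  linarith

lemma sum_rpow_neg_le {s : ℝ} (hs0 : 0 < s) (hs1 : s < 1) (N : ℕ) :
    ∑ k ∈ Finset.Icc 1 N, (k : ℝ) ^ (-s) ≤ (N : ℝ) ^ (1 - s) / (1 - s) := by
  have h1s : 0 < 1 - s := by linarith
  rw [le_div_iff₀ h1s]
  rw [← Finset.Ico_add_one_right_eq_Icc, Finset.sum_Ico_eq_sum_range]
  have key : (∑ i ∈ Finset.range N, ((1 + i : ℕ) : ℝ) ^ (-s)) * (1 - s)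
      ≤ ∑ i ∈ Finset.range N, (((i+1:ℕ):ℝ) ^ (1-s) - ((i:ℕ):ℝ) ^ (1-s)) := by
    rw [Finset.sum_mul]
    apply Finset.sum_le_sum
    intro i _
    have hx : (1:ℝ) ≤ (i:ℝ) + 1 := by have := Nat.cast_nonneg (α := ℝ) i; linarith
    have h := ptwise hs0 hs1 hx
    have hc : (i:ℝ) + 1 - 1 = (i:ℝ) := by ring
    rw [hc] at h
    push_cast
    rw [add_comm (1:ℝ) (i:ℝ)]
    linarith
  calc (∑ i ∈ Finset.range N, ((1 + i : ℕ) : ℝ) ^ (-s)) * (1 - s)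
      ≤ ∑ i ∈ Finset.range N, (((i+1:ℕ):ℝ) ^ (1-s) - ((i:ℕ):ℝ) ^ (1-s)) := key
    _ = ((N:ℕ):ℝ) ^ (1-s) - ((0:ℕ):ℝ) ^ (1-s) := Finset.sum_range_sub (fun j => ((j:ℕ):ℝ) ^ (1-s)) N
    _ = (N:ℝ) ^ (1-s) := by simp [Real.zero_rpow (by linarith : (1:ℝ) - s ≠ 0)]

lemma telescope_inv_le (N : ℕ) : ∑ d ∈ Finset.Icc 2 N, (1/((d:ℝ)-1) - 1/(d:ℝ)) ≤ 1 := by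
  rw [← Finset.Ico_add_one_right_eq_Icc, Finset.sum_Ico_eq_sum_range]
  set f : ℕ → ℝ := fun j => -(1/((j:ℝ)+1)) with hf
  have : ∑ i ∈ Finset.range (N + 1 - 2), (1/(((2+i:ℕ):ℝ)-1) - 1/((2+i:ℕ):ℝ))
      = ∑ i ∈ Finset.range (N + 1 - 2), (f (i+1) - f i) := by
    apply Finset.sum_congr rfl
    intro i _
    rw [hf]
    push_cast
    have h2 : ((i:ℝ)) + 1 ≠ 0 := by positivity
    have h3 : ((i:ℝ)) + 1 + 1 ≠ 0 := by positivity
    have h1 : (2:ℝ) + i - 1 = (i:ℝ) + 1 := by ring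
    have h4 : (2:ℝ) + i = (i:ℝ) + 1 + 1 := by ring
    rw [h1, h4]
    ring
  rw [this, Finset.sum_range_sub f]
  rw [hf]
  simp only
  have h0 : (0:ℝ) < 1/(((N+1-2 : ℕ):ℝ) + 1) := by positivity
  norm_num
  linarith

lemma card_primitive_ge {n : ℕ} (hn : 3 ≤ n) (N : ℕ) (hN : 1 ≤ N) :
    ((N:ℝ) ^ n) / 2 ≤ (((Fintype.piFinset (fun _ : Fin n => Finset.Icc 1 N)).filter
      (fun a => Finset.univ.gcd a = 1)).card : ℝ) := by
  classical
  set B := Fintype.piFinset (fun _ : Fin n => Finset.Icc 1 N) with hB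
  have hBcard : B.card = N ^ n := by
    rw [Fintype.card_piFinset]
    simp [Nat.card_Icc]
  have hsplit : (B.filter (fun a => Finset.univ.gcd a = 1)).card
      + (B.filter (fun a => ¬ Finset.univ.gcd a = 1)).card = B.card :=
    Finset.card_filter_add_card_filter_not _
  set bad := B.filter (fun a => ¬ Finset.univ.gcd a = 1) with hbad
  have i0 : Fin n := ⟨0, by omega⟩
  have hsub : bad ⊆ (Finset.Icc 2 N).biUnion
      (fun d => Fintype.piFinset (fun _ : Fin n => (Finset.Icc 1 N).filter (fun k => d ∣ k))) := by
    intro a ha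
    rw [hbad, Finset.mem_filter] at ha
    obtain ⟨haB, hg⟩ := ha
    rw [hB, Fintype.mem_piFinset] at haB
    set d := Finset.univ.gcd a with hd
    have hdvd : ∀ i, d ∣ a i := fun i => Finset.gcd_dvd (Finset.mem_univ i)
    have h1 : ∀ i, 1 ≤ a i ∧ a i ≤ N := by
      intro i; have := haB i; rw [Finset.mem_Icc] at this; exact this
    have hd0 : d ≠ 0 := by
      intro h
      have h5 := hdvd i0
      rw [h] at h5
      have h6 := Nat.eq_zero_of_zero_dvd h5
      have h7 := (h1 i0).1
      omega
    have hd1 : d ≠ 1 := hg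
    have hdN : d ≤ N := le_trans (Nat.le_of_dvd (h1 i0).1 (hdvd i0)) (h1 i0).2
    rw [Finset.mem_biUnion]
    refine ⟨d, ?_, ?_⟩
    · rw [Finset.mem_Icc]
      exact ⟨by omega, hdN⟩
    · rw [Fintype.mem_piFinset]
      intro i
      rw [Finset.mem_filter]
      exact ⟨haB i, hdvd i⟩
  have hbadcard : (bad.card : ℝ) ≤ ∑ d ∈ Finset.Icc 2 N, (((N / d : ℕ) : ℝ)) ^ n := by
    have h1 : bad.card ≤ ∑ d ∈ Finset.Icc 2 N,
        (Fintype.piFinset (fun _ : Fin n => (Finset.Icc 1 N).filter (fun k => d ∣ k))).card :=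
      le_trans (Finset.card_le_card hsub) (Finset.card_biUnion_le)
    have h2 : ∀ d, (Fintype.piFinset
        (fun _ : Fin n => (Finset.Icc 1 N).filter (fun k => d ∣ k))).card = (N / d) ^ n := by
      intro d
      rw [Fintype.card_piFinset]
      have : Finset.Icc 1 N = Finset.Ioc 0 N := rfl
      rw [this]
      simp [Nat.Ioc_filter_dvd_card_eq_div]
    calc (bad.card : ℝ) ≤ ((∑ d ∈ Finset.Icc 2 N,
          (Fintype.piFinset (fun _ : Fin n => (Finset.Icc 1 N).filter (fun k => d ∣ k))).card : ℕ) : ℝ) := by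
          exact_mod_cast h1
      _ = ∑ d ∈ Finset.Icc 2 N, (((N / d : ℕ) : ℝ)) ^ n := by
          push_cast
          exact Finset.sum_congr rfl (fun d _ => by rw [h2 d]; push_cast; ring)
  have hptw : ∀ d ∈ Finset.Icc 2 N, (((N / d : ℕ) : ℝ)) ^ n
      ≤ (N:ℝ)^n / 2 * (1/((d:ℝ)-1) - 1/(d:ℝ)) := by
    intro d hd
    rw [Finset.mem_Icc] at hd
    have hd2 : (2:ℝ) ≤ (d:ℝ) := by exact_mod_cast hd.1
    have hdpos : (0:ℝ) < d := by linarith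
    have hstep1 : (((N / d : ℕ) : ℝ)) ^ n ≤ ((N:ℝ)/(d:ℝ)) ^ n :=
      pow_le_pow_left₀ (by positivity) (Nat.cast_div_le) n
    have hstep2 : ((N:ℝ)/(d:ℝ)) ^ n = (N:ℝ)^n / (d:ℝ)^n := div_pow _ _ _
    have hd3n : (d:ℝ)^3 ≤ (d:ℝ)^n := pow_le_pow_right₀ (by linarith) hn
    have hcube : (0:ℝ) ≤ (d:ℝ)^2 * ((d:ℝ) - 2) :=
      mul_nonneg (sq_nonneg _) (by linarith)
    have hd32 : 2*((d:ℝ)-1)*(d:ℝ) ≤ (d:ℝ)^3 := by nlinarith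
    have hden : 2*((d:ℝ)-1)*(d:ℝ) ≤ (d:ℝ)^n := le_trans hd32 hd3n
    have hdenpos : (0:ℝ) < 2*((d:ℝ)-1)*(d:ℝ) := by nlinarith
    have hstep3 : (N:ℝ)^n / (d:ℝ)^n ≤ (N:ℝ)^n / (2*((d:ℝ)-1)*(d:ℝ)) :=
      div_le_div_of_nonneg_left (by positivity) hdenpos hden
    have hne1 : (d:ℝ) - 1 ≠ 0 := by linarith
    have hne2 : (d:ℝ) ≠ 0 := by linarith
    have hstep4 : (N:ℝ)^n / (2*((d:ℝ)-1)*(d:ℝ)) = (N:ℝ)^n / 2 * (1/((d:ℝ)-1) - 1/(d:ℝ)) := by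
      field_simp
      ring
    linarith
  have hsum : (bad.card : ℝ) ≤ (N:ℝ)^n / 2 := by
    calc (bad.card : ℝ) ≤ ∑ d ∈ Finset.Icc 2 N, (((N / d : ℕ) : ℝ)) ^ n := hbadcard
      _ ≤ ∑ d ∈ Finset.Icc 2 N, (N:ℝ)^n / 2 * (1/((d:ℝ)-1) - 1/(d:ℝ)) := Finset.sum_le_sum hptw
      _ = (N:ℝ)^n / 2 * ∑ d ∈ Finset.Icc 2 N, (1/((d:ℝ)-1) - 1/(d:ℝ)) := by rw [Finset.mul_sum]
      _ ≤ (N:ℝ)^n / 2 * 1 :=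
          mul_le_mul_of_nonneg_left (telescope_inv_le N) (by positivity)
      _ = (N:ℝ)^n / 2 := mul_one _
  have hnat : (B.filter (fun a => Finset.univ.gcd a = 1)).card + bad.card = N ^ n := by
    rw [hsplit, hBcard]
  have hGcard : ((B.filter (fun a => Finset.univ.gcd a = 1)).card : ℝ) + (bad.card : ℝ)
      = (N:ℝ)^n := by exact_mod_cast hnat
  linarith

lemma sum_box_le {n : ℕ} (hn : 3 ≤ n) {s : ℝ} (hs0 : 0 < s) (hs1 : s < 1) (N : ℕ) (hN : 1 ≤ N) :
    ∑ a ∈ Fintype.piFinset (fun _ : Fin n => Finset.Icc 1 N),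
      (∑ i, (a i : ℝ)) / (∏ i, (a i : ℝ)) ^ s
      ≤ n * ((N:ℝ) * (N:ℝ)^(1-s)) * ((N:ℝ)^(1-s)/(1-s))^(n-1) := by
  classical
  set B := Fintype.piFinset (fun _ : Fin n => Finset.Icc 1 N) with hB
  set g : Fin n → Fin n → ℕ → ℝ := fun i j k => (k:ℝ)^(-s) * (if j = i then (k:ℝ) else 1) with hg
  have h1s : 0 < 1 - s := by linarith
  -- rewrite the summand
  have hrw : ∀ a ∈ B, (∑ i, (a i : ℝ)) / (∏ i, (a i : ℝ)) ^ s
      = ∑ i, ∏ j, g i j (a j) := by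
    intro a ha
    rw [hB, Fintype.mem_piFinset] at ha
    have hpos : ∀ j, (0:ℝ) < (a j : ℝ) := by
      intro j
      have := ha j
      rw [Finset.mem_Icc] at this
      exact_mod_cast Nat.lt_of_lt_of_le Nat.zero_lt_one this.1
    have hprodpow : (∏ i, (a i : ℝ)) ^ s = ∏ i, ((a i : ℝ)) ^ s :=
      (Real.finset_prod_rpow Finset.univ _ (fun i _ => (hpos i).le) s).symm
    have hterm : ∀ i, ∏ j, g i j (a j) = (a i : ℝ) * ∏ j, ((a j : ℝ)) ^ (-s) := by
      intro i
      rw [hg]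
      simp only
      rw [Finset.prod_mul_distrib, Finset.prod_ite_eq' Finset.univ i (fun j => ((a j : ℝ)))]
      simp [mul_comm]
    have hinv : ∏ j, ((a j : ℝ)) ^ (-s) = (∏ j, ((a j : ℝ)) ^ s)⁻¹ := by
      rw [← Finset.prod_inv_distrib]
      exact Finset.prod_congr rfl fun j _ => Real.rpow_neg (hpos j).le s
    rw [hprodpow]
    simp only [hterm, hinv]
    rw [← Finset.sum_mul, div_eq_mul_inv]
  rw [Finset.sum_congr rfl hrw, Finset.sum_comm]
  have hfac : ∀ i : Fin n, ∑ a ∈ B, ∏ j, g i j (a j)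
      = ∏ j, ∑ k ∈ Finset.Icc 1 N, g i j k := by
    intro i
    rw [hB, Finset.prod_univ_sum]
  have hSs : ∑ k ∈ Finset.Icc 1 N, (k:ℝ)^(-s) ≤ (N:ℝ)^(1-s)/(1-s) := sum_rpow_neg_le hs0 hs1 N
  have hSsnn : (0:ℝ) ≤ ∑ k ∈ Finset.Icc 1 N, (k:ℝ)^(-s) :=
    Finset.sum_nonneg fun k _ => Real.rpow_nonneg (Nat.cast_nonneg k) _
  have hSi : ∑ k ∈ Finset.Icc 1 N, (k:ℝ)^(-s) * (k:ℝ) ≤ (N:ℝ) * (N:ℝ)^(1-s) := by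
    have hb : ∀ k ∈ Finset.Icc 1 N, (k:ℝ)^(-s) * (k:ℝ) ≤ (N:ℝ)^(1-s) := by
      intro k hk
      rw [Finset.mem_Icc] at hk
      have hk1 : (1:ℝ) ≤ (k:ℝ) := by exact_mod_cast hk.1
      have hkN : (k:ℝ) ≤ (N:ℝ) := by exact_mod_cast hk.2
      have hk0 : (0:ℝ) < (k:ℝ) := by linarith
      have : (k:ℝ)^(-s) * (k:ℝ) = (k:ℝ)^(1-s) := by
        nth_rewrite 2 [← Real.rpow_one (k:ℝ)]
        rw [← Real.rpow_add hk0]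
        congr 1
        ring
      rw [this]
      exact Real.rpow_le_rpow (by linarith) hkN h1s.le
    calc ∑ k ∈ Finset.Icc 1 N, (k:ℝ)^(-s) * (k:ℝ)
        ≤ ∑ k ∈ Finset.Icc 1 N, (N:ℝ)^(1-s) := Finset.sum_le_sum hb
      _ = (N:ℝ) * (N:ℝ)^(1-s) := by
          rw [Finset.sum_const, Nat.card_Icc]
          simp [nsmul_eq_mul]
  have hSinn : (0:ℝ) ≤ ∑ k ∈ Finset.Icc 1 N, (k:ℝ)^(-s) * (k:ℝ) :=
    Finset.sum_nonneg fun k _ =>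
      mul_nonneg (Real.rpow_nonneg (Nat.cast_nonneg k) _) (Nat.cast_nonneg k)
  have hone : ∀ i : Fin n, ∏ j, ∑ k ∈ Finset.Icc 1 N, g i j k
      ≤ ((N:ℝ) * (N:ℝ)^(1-s)) * ((N:ℝ)^(1-s)/(1-s))^(n-1) := by
    intro i
    have hsplit : ∏ j, ∑ k ∈ Finset.Icc 1 N, g i j k
        = (∑ k ∈ Finset.Icc 1 N, g i i k) * ∏ j ∈ Finset.univ.erase i, ∑ k ∈ Finset.Icc 1 N, g i j k :=
      (Finset.mul_prod_erase Finset.univ _ (Finset.mem_univ i)).symm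
    have hgii : ∀ k, g i i k = (k:ℝ)^(-s) * (k:ℝ) := by intro k; rw [hg]; simp
    have hgij : ∀ j, j ≠ i → ∀ k, g i j k = (k:ℝ)^(-s) := by
      intro j hj k; rw [hg]; simp [hj]
    rw [hsplit]
    have hb1 : ∑ k ∈ Finset.Icc 1 N, g i i k ≤ (N:ℝ) * (N:ℝ)^(1-s) := by
      simp only [hgii]; exact hSi
    have hb1nn : (0:ℝ) ≤ ∑ k ∈ Finset.Icc 1 N, g i i k := by
      simp only [hgii]; exact hSinn
    have hb2 : ∏ j ∈ Finset.univ.erase i, ∑ k ∈ Finset.Icc 1 N, g i j k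
        ≤ ((N:ℝ)^(1-s)/(1-s))^(n-1) := by
      calc ∏ j ∈ Finset.univ.erase i, ∑ k ∈ Finset.Icc 1 N, g i j k
          ≤ ∏ _j ∈ Finset.univ.erase i, ((N:ℝ)^(1-s)/(1-s)) := by
            apply Finset.prod_le_prod
            · intro j hj
              rw [Finset.sum_congr rfl (fun k _ => hgij j (Finset.ne_of_mem_erase hj) k)]
              exact hSsnn
            · intro j hj
              rw [Finset.sum_congr rfl (fun k _ => hgij j (Finset.ne_of_mem_erase hj) k)]
              exact hSs
        _ = ((N:ℝ)^(1-s)/(1-s))^(n-1) := by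
            rw [Finset.prod_const, Finset.card_erase_of_mem (Finset.mem_univ i), Finset.card_univ,
              Fintype.card_fin]
    have hb2nn : (0:ℝ) ≤ ∏ j ∈ Finset.univ.erase i, ∑ k ∈ Finset.Icc 1 N, g i j k := by
      apply Finset.prod_nonneg
      intro j hj
      apply Finset.sum_nonneg
      intro k _
      rw [hg]
      have : (0:ℝ) ≤ (k:ℝ) := Nat.cast_nonneg k
      positivity
    exact mul_le_mul hb1 hb2 hb2nn (by positivity)
  have htot : ∑ i : Fin n, ∑ a ∈ B, ∏ j, g i j (a j)
      ≤ ∑ _i : Fin n, ((N:ℝ) * (N:ℝ)^(1-s)) * ((N:ℝ)^(1-s)/(1-s))^(n-1) := by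
    apply Finset.sum_le_sum
    intro i _
    rw [hfac i]
    exact hone i
  rw [Finset.sum_const, Finset.card_univ, Fintype.card_fin, nsmul_eq_mul] at htot
  rw [mul_assoc]
  exact htot

/-- **Average of `(a₁+⋯+aₙ)/(a₁⋯aₙ)^(1/(n-1))` over primitive vectors**
(from Proposition 1 of Aliev–Henk–Hinrichs, as used in Aliev–Fukshansky–Henk).
For `n ≥ 3` there is a constant `C = C_n > 0` such that for every `T ≥ 1`, the average
over `G(T)` (primitive positive integer vectors with `max aᵢ ≤ T`) of
`(a₁ + ⋯ + aₙ)/(a₁⋯aₙ)^(1/(n-1))` is at most `C · T^(-1/(n-1))`. -/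
theorem average_sum_div_prod_bound {n : ℕ} (hn : 3 ≤ n) :
    ∃ C : ℝ, 0 < C ∧
      ∀ T : ℝ, 1 ≤ T →
      ∀ G : Finset (Fin n → ℕ),
        (∀ a, a ∈ G ↔ ((∀ i, 0 < a i) ∧ Finset.univ.gcd a = 1 ∧ ∀ i, (a i : ℝ) ≤ T)) →
        (1 / (G.card : ℝ)) * ∑ a ∈ G,
            (∑ i, (a i : ℝ)) / (∏ i, (a i : ℝ)) ^ ((1 : ℝ) / ((n : ℝ) - 1))
          ≤ C * T ^ (-((1 : ℝ) / ((n : ℝ) - 1))) := by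
  classical
  have hn3 : (3:ℝ) ≤ (n:ℝ) := by exact_mod_cast hn
  set s : ℝ := (1 : ℝ) / ((n : ℝ) - 1) with hsdef
  have hden : (0:ℝ) < (n:ℝ) - 1 := by linarith
  have hs0 : 0 < s := by rw [hsdef]; positivity
  have hs1 : s < 1 := by
    rw [hsdef, div_lt_one hden]; linarith
  have h1s : 0 < 1 - s := by linarith
  have hsn : s * ((n:ℝ) - 1) = 1 := by
    rw [hsdef]; field_simp
  have hn0 : (0:ℝ) < (n:ℝ) := by linarith
  set C : ℝ := 4 * (n:ℝ) / (1-s)^(n-1) with hCdef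
  have hC : 0 < C := by rw [hCdef]; positivity
  refine ⟨C, hC, ?_⟩
  intro T hT G hG
  have hT0 : (0:ℝ) < T := by linarith
  set N : ℕ := ⌊T⌋₊ with hNdef
  have hN1 : 1 ≤ N := Nat.le_floor (by exact_mod_cast hT)
  have hX1 : (1:ℝ) ≤ (N:ℝ) := by exact_mod_cast hN1
  have hX0 : (0:ℝ) < (N:ℝ) := by linarith
  set X : ℝ := (N:ℝ) with hXdef
  -- identify G
  have hGeq : G = (Fintype.piFinset (fun _ : Fin n => Finset.Icc 1 N)).filter
      (fun a => Finset.univ.gcd a = 1) := by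
    ext a
    rw [hG a, Finset.mem_filter, Fintype.mem_piFinset]
    simp only [Finset.mem_Icc]
    have hle : ∀ i, ((a i : ℝ) ≤ T ↔ a i ≤ N) := by
      intro i
      rw [hNdef]
      exact (Nat.le_floor_iff hT0.le).symm
    constructor
    · rintro ⟨h1, h2, h3⟩
      exact ⟨fun i => ⟨h1 i, (hle i).mp (h3 i)⟩, h2⟩
    · rintro ⟨h1, h2⟩
      exact ⟨fun i => (h1 i).1, h2, fun i => (hle i).mpr (h1 i).2⟩
  have hcard : X ^ n / 2 ≤ (G.card : ℝ) := by
    rw [hGeq]; exact card_primitive_ge hn N hN1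
  have hcardpos : (0:ℝ) < (G.card : ℝ) := lt_of_lt_of_le (by positivity) hcard
  have hsumnn : (0:ℝ) ≤ ∑ a ∈ G, (∑ i, (a i : ℝ)) / (∏ i, (a i : ℝ)) ^ s := by
    apply Finset.sum_nonneg
    intro a _
    apply div_nonneg
    · exact Finset.sum_nonneg fun i _ => Nat.cast_nonneg _
    · apply Real.rpow_nonneg
      exact Finset.prod_nonneg fun i _ => Nat.cast_nonneg _
  have hsum : ∑ a ∈ G, (∑ i, (a i : ℝ)) / (∏ i, (a i : ℝ)) ^ s
      ≤ (n:ℝ) * (X * X^(1-s)) * (X^(1-s)/(1-s))^(n-1) := by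
    calc ∑ a ∈ G, (∑ i, (a i : ℝ)) / (∏ i, (a i : ℝ)) ^ s
        ≤ ∑ a ∈ Fintype.piFinset (fun _ : Fin n => Finset.Icc 1 N),
            (∑ i, (a i : ℝ)) / (∏ i, (a i : ℝ)) ^ s := by
          rw [hGeq]
          apply Finset.sum_le_sum_of_subset_of_nonneg (Finset.filter_subset _ _)
          intro a _ _
          apply div_nonneg (Finset.sum_nonneg fun i _ => Nat.cast_nonneg _)
            (Real.rpow_nonneg (Finset.prod_nonneg fun i _ => Nat.cast_nonneg _) _)
      _ ≤ (n:ℝ) * (X * X^(1-s)) * (X^(1-s)/(1-s))^(n-1) := sum_box_le hn hs0 hs1 N hN1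
  -- step 1 : bound 1/card
  have hinv : 1 / (G.card : ℝ) ≤ 2 / X ^ n := by
    rw [show (2:ℝ) / X ^ n = 1 / (X ^ n / 2) by rw [one_div_div]]
    exact one_div_le_one_div_of_le (by positivity) hcard
  have step1 : (1 / (G.card : ℝ)) * ∑ a ∈ G, (∑ i, (a i : ℝ)) / (∏ i, (a i : ℝ)) ^ s
      ≤ (2 / X ^ n) * ((n:ℝ) * (X * X^(1-s)) * (X^(1-s)/(1-s))^(n-1)) :=
    mul_le_mul hinv hsum hsumnn (by positivity)
  -- key identity
  have hm : ((n-1:ℕ):ℝ) = (n:ℝ) - 1 := by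
    have : 1 ≤ n := by omega
    push_cast [Nat.cast_sub this]
    ring
  have hkey : (2 / X ^ n) * ((n:ℝ) * (X * X^(1-s)) * (X^(1-s)/(1-s))^(n-1))
      = (2 * (n:ℝ) / (1-s)^(n-1)) * X ^ (-s) := by
    rw [div_pow (X^(1-s)) (1-s) (n-1)]
    rw [← Real.rpow_natCast (X^(1-s)) (n-1), ← Real.rpow_mul hX0.le, hm]
    rw [← Real.rpow_natCast X n]
    have e1 : X * X^(1-s) = X^(1+(1-s)) := by rw [Real.rpow_add hX0, Real.rpow_one]
    have e2 : X^(1+(1-s)) * X^((1-s)*((n:ℝ)-1)) = X^(1+(1-s)+(1-s)*((n:ℝ)-1)) :=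
      (Real.rpow_add hX0 _ _).symm
    have e3 : X^(1+(1-s)+(1-s)*((n:ℝ)-1)) / X^((n:ℝ)) = X^(1+(1-s)+(1-s)*((n:ℝ)-1) - (n:ℝ)) :=
      (Real.rpow_sub hX0 _ _).symm
    have e4 : 1+(1-s)+(1-s)*((n:ℝ)-1) - (n:ℝ) = -s := by linear_combination -hsn
    have e5 : X * X^(1-s) * X^((1-s)*((n:ℝ)-1)) = X^(-s) * X^n := by
      rw [e1, e2, ← Real.rpow_natCast X n, ← Real.rpow_add hX0]
      congr 1
      linarith [e4]
    rw [Real.rpow_natCast]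
    have hXn : X^n ≠ 0 := by positivity
    calc 2 / X^n * ((n:ℝ) * (X*X^(1-s)) * (X^((1-s)*((n:ℝ)-1)) / (1-s)^(n-1)))
        = 2*n*(X*X^(1-s)*X^((1-s)*((n:ℝ)-1))) / (X^n*(1-s)^(n-1)) := by ring
      _ = X^n * (2*n*X^(-s)) / (X^n*(1-s)^(n-1)) := by rw [e5]; ring
      _ = 2*n*X^(-s)/(1-s)^(n-1) := mul_div_mul_left _ _ hXn
      _ = _ := by ring
  -- compare X^{-s} with T^{-s}
  have hNT : T / 2 ≤ X := by
    rcases le_or_gt T 2 with h | h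
    · calc T / 2 ≤ 1 := by linarith
        _ ≤ X := hX1
    · have := Nat.sub_one_lt_floor T
      have hXf : T - 1 < X := by rw [hXdef, hNdef]; exact this
      linarith
  have hXT : X ^ (-s) ≤ 2 * T ^ (-s) := by
    have h1 : X ^ (-s) ≤ (T/2) ^ (-s) :=
      Real.rpow_le_rpow_of_nonpos (by positivity) hNT (by linarith)
    have h2 : (T/2 : ℝ) ^ (-s) = T ^ (-s) * 2 ^ s := by
      rw [Real.div_rpow hT0.le (by norm_num : (0:ℝ) ≤ 2)]
      rw [Real.rpow_neg (by norm_num : (0:ℝ) ≤ 2)]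
      field_simp
    have h3 : (2:ℝ) ^ s ≤ 2 := by
      calc (2:ℝ) ^ s ≤ (2:ℝ) ^ (1:ℝ) :=
            Real.rpow_le_rpow_of_exponent_le (by norm_num) (by linarith)
        _ = 2 := Real.rpow_one 2
    calc X ^ (-s) ≤ (T/2) ^ (-s) := h1
      _ = T ^ (-s) * 2 ^ s := h2
      _ ≤ T ^ (-s) * 2 := by
          apply mul_le_mul_of_nonneg_left h3 (Real.rpow_nonneg hT0.le _)
      _ = 2 * T ^ (-s) := by ring
  calc (1 / (G.card : ℝ)) * ∑ a ∈ G, (∑ i, (a i : ℝ)) / (∏ i, (a i : ℝ)) ^ s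
      ≤ (2 / X ^ n) * ((n:ℝ) * (X * X^(1-s)) * (X^(1-s)/(1-s))^(n-1)) := step1
    _ = (2 * (n:ℝ) / (1-s)^(n-1)) * X ^ (-s) := hkey
    _ ≤ (2 * (n:ℝ) / (1-s)^(n-1)) * (2 * T ^ (-s)) := by
        apply mul_le_mul_of_nonneg_left hXT (by positivity)
    _ = C * T ^ (-s) := by rw [hCdef]; ring
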